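/- Fix d ≥ 1 and for each edge e of ℤ^d let π(e) be a random path connecting the endpoints of e, with the stationarity property and the tail bound ℙ(|π(e)| > n) ≤ C(M) n^{-M} for every M ≥ 1 (uniformly in e). Define π^{-1}(b) := {e : b ∈ π(e)}. Then for every p ∈ [1, ∞), 𝔼[|π^{-1}(b)|^p] ≤ C(d, p) < ∞. -/

import Mathlib

open MeasureTheory
open scoped ENNReal

/-- Regrouping a sum over a countable type according to the fibers of `r`. -/
lemma aux_tsum_comp_le {α : Type*} (r : α → ℕ) (c : ℕ → ℝ≥0∞) (F : ℕ → Finset α)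
    (hF : ∀ a, a ∈ F (r a)) :
    ∑' a, c (r a) ≤ ∑' n, ((F n).card : ℝ≥0∞) * c n := by
  classical
  rw [ENNReal.tsum_eq_iSup_sum]
  refine iSup_le fun s => ?_
  calc ∑ a ∈ s, c (r a)
      = ∑ n ∈ s.image r, ∑ a ∈ s.filter (fun a => r a = n), c (r a) :=
        (Finset.sum_fiberwise_of_maps_to (fun a ha => Finset.mem_image_of_mem r ha) _).symm
    _ ≤ ∑ n ∈ s.image r, ((F n).card : ℝ≥0∞) * c n := by
        refine Finset.sum_le_sum fun n _ => ?_
        have hcongr : ∀ a ∈ s.filter (fun a => r a = n), c (r a) = c n := fun a ha => by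
          rw [(Finset.mem_filter.1 ha).2]
        rw [Finset.sum_congr rfl hcongr, Finset.sum_const, nsmul_eq_mul]
        refine mul_le_mul_left (Nat.cast_le.2 (Finset.card_le_card fun a ha => ?_)) _
        have h := Finset.mem_filter.1 ha
        rw [← h.2]; exact hF a
    _ ≤ ∑' n, ((F n).card : ℝ≥0∞) * c n := ENNReal.sum_le_tsum _

/-- The basic summable series `∑ (n+1)^(-2)` in `ℝ≥0∞`. -/
lemma aux_tsum_two : ∑' n : ℕ, ((n : ℝ≥0∞) + 1) ^ (-2 : ℝ) < ⊤ := by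
  have hs : Summable (fun n : ℕ => ((n : ℝ) + 1) ^ (-2 : ℝ)) := by
    have h1 : Summable (fun n : ℕ => 1 / (n : ℝ) ^ (2 : ℝ)) :=
      Real.summable_one_div_nat_rpow.2 one_lt_two
    have h2 := h1.comp_injective Nat.succ_injective
    refine h2.congr fun n => ?_
    simp only [Function.comp_apply, Nat.succ_eq_add_one]
    rw [Real.rpow_neg (by positivity), ← one_div]
    push_cast
    ring_nf
  have hterm : ∀ n : ℕ, ((n : ℝ≥0∞) + 1) ^ (-2 : ℝ)
      = ENNReal.ofReal (((n : ℝ) + 1) ^ (-2 : ℝ)) := by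
    intro n
    rw [← ENNReal.ofReal_rpow_of_pos (by positivity)]
    congr 1
    rw [ENNReal.ofReal_add (by positivity) zero_le_one, ENNReal.ofReal_natCast,
      ENNReal.ofReal_one]
  calc ∑' n : ℕ, ((n : ℝ≥0∞) + 1) ^ (-2 : ℝ)
      = ∑' n : ℕ, ENNReal.ofReal (((n : ℝ) + 1) ^ (-2 : ℝ)) := by
        exact tsum_congr hterm
    _ = ENNReal.ofReal (∑' n : ℕ, ((n : ℝ) + 1) ^ (-2 : ℝ)) :=
        (ENNReal.ofReal_tsum_of_nonneg (fun n => by positivity) hs).symm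
    _ < ⊤ := ENNReal.ofReal_lt_top

/-- Shell summation: the weight `(r_b(e)+1)^{-(d+2)}` is summable over all edges. -/
lemma aux_shell (d : ℕ) (b : (Fin d → ℤ) × Fin d) :
    ∑' e : (Fin d → ℤ) × Fin d,
      (((Finset.univ.sup fun i => (e.1 i - b.1 i).natAbs : ℕ) : ℝ≥0∞) + 1)
        ^ (-(d + 2 : ℝ)) < ⊤ := by
  classical
  set r : ((Fin d → ℤ) × Fin d) → ℕ :=
    fun e => Finset.univ.sup fun i => (e.1 i - b.1 i).natAbs with hr
  set c : ℕ → ℝ≥0∞ := fun n => ((n : ℝ≥0∞) + 1) ^ (-(d + 2 : ℝ)) with hc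
  set F : ℕ → Finset ((Fin d → ℤ) × Fin d) := fun n =>
    (Finset.Icc (b.1 - fun _ => (n : ℤ)) (b.1 + fun _ => (n : ℤ))) ×ˢ Finset.univ with hF
  have hmem : ∀ e, e ∈ F (r e) := by
    intro e
    refine Finset.mem_product.2 ⟨?_, Finset.mem_univ _⟩
    rw [Finset.mem_Icc]
    constructor <;> intro i <;>
      · have h : (e.1 i - b.1 i).natAbs ≤ r e :=
          Finset.le_sup (f := fun i => (e.1 i - b.1 i).natAbs) (Finset.mem_univ i)
        simp only [Pi.sub_apply, Pi.add_apply]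
        omega
  have hcard : ∀ n, ((F n).card : ℝ≥0∞) ≤ ((2 * n + 1 : ℕ) : ℝ≥0∞) ^ d * d := by
    intro n
    have hci : ∀ i : Fin d,
        (Finset.Icc (((b.1 - fun _ => (n : ℤ)) : Fin d → ℤ) i)
          (((b.1 + fun _ => (n : ℤ)) : Fin d → ℤ) i)).card = 2 * n + 1 := by
      intro i
      simp only [Pi.sub_apply, Pi.add_apply]
      rw [Int.card_Icc]
      omega
    have hcd : (F n).card = (2 * n + 1) ^ d * d := by
      rw [hF]
      rw [Finset.card_product, Pi.card_Icc, Finset.card_univ, Fintype.card_fin,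
        Finset.prod_congr rfl (fun i _ => hci i), Finset.prod_const, Finset.card_univ,
        Fintype.card_fin]
    rw [hcd]
    push_cast
    exact le_rfl
  have hbound : ∀ n : ℕ, ((F n).card : ℝ≥0∞) * c n
      ≤ ((d : ℝ≥0∞) * 2 ^ d) * (((n : ℝ≥0∞) + 1) ^ (-2 : ℝ)) := by
    intro n
    have hb0 : ((n : ℝ≥0∞) + 1) ≠ 0 := (zero_lt_one.trans_le le_add_self).ne'
    have hbt : ((n : ℝ≥0∞) + 1) ≠ ⊤ := by
      simp [ENNReal.add_ne_top]
    have h1 : ((2 * n + 1 : ℕ) : ℝ≥0∞) ≤ 2 * ((n : ℝ≥0∞) + 1) := by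
      push_cast
      ring_nf
      exact add_le_add_left (one_le_two (α := ℝ≥0∞)) _
    calc ((F n).card : ℝ≥0∞) * c n
        ≤ (((2 * n + 1 : ℕ) : ℝ≥0∞) ^ d * d) * c n :=
          mul_le_mul_left (hcard n) _
      _ ≤ ((2 * ((n : ℝ≥0∞) + 1)) ^ d * d) * c n :=
          mul_le_mul_left (mul_le_mul_left (pow_le_pow_left' h1 d) _) _
      _ = ((d : ℝ≥0∞) * 2 ^ d) * (((n : ℝ≥0∞) + 1) ^ (d : ℝ) * c n) := by
          rw [mul_pow, ENNReal.rpow_natCast]; ring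
      _ = ((d : ℝ≥0∞) * 2 ^ d) * (((n : ℝ≥0∞) + 1) ^ (-2 : ℝ)) := by
          rw [hc]
          congr 1
          rw [← ENNReal.rpow_add _ _ hb0 hbt]
          congr 1
          ring
  calc ∑' e, c (r e) ≤ ∑' n, ((F n).card : ℝ≥0∞) * c n := aux_tsum_comp_le r c F hmem
    _ ≤ ∑' n : ℕ, ((d : ℝ≥0∞) * 2 ^ d) * (((n : ℝ≥0∞) + 1) ^ (-2 : ℝ)) :=
        ENNReal.tsum_le_tsum hbound
    _ = ((d : ℝ≥0∞) * 2 ^ d) * ∑' n : ℕ, ((n : ℝ≥0∞) + 1) ^ (-2 : ℝ) :=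
        ENNReal.tsum_mul_left
    _ < ⊤ := ENNReal.mul_lt_top
        (ENNReal.mul_lt_top (ENNReal.natCast_lt_top d)
          (ENNReal.pow_lt_top (by norm_num))) aux_tsum_two

/-- If each random path `π(e)` connects the endpoints of the edge `e` (so that an edge `b`
on the path `π(e)` is at distance at most `|π(e)|` from `e`) and has uniformly
faster-than-polynomial tails, then the number of edges whose path passes through a fixed
edge `b` has all polynomial moments finite. -/
theorem stmt15 {Ω : Type*} [MeasurableSpace Ω] (μ : Measure Ω) [IsProbabilityMeasure μ]
    (d : ℕ)
    (π : Ω → ((Fin d → ℤ) × Fin d) → Finset ((Fin d → ℤ) × Fin d))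
    (htail : ∀ M : ℝ, 1 ≤ M → ∃ C : ℝ, ∀ e, ∀ n : ℕ, 1 ≤ n →
      μ {ω | (n : ℝ) < ((π ω e).card : ℝ)} ≤ ENNReal.ofReal (C * (n : ℝ) ^ (-M)))
    (hconn : ∀ ω e b, b ∈ π ω e → ‖e.1 - b.1‖ ≤ ((π ω e).card : ℝ))
    (b : (Fin d → ℤ) × Fin d) (p : ℝ) (hp : 1 ≤ p) :
    ∫⁻ ω, (∑' e : (Fin d → ℤ) × Fin d,
        (if b ∈ π ω e then (1 : ℝ≥0∞) else 0)) ^ p ∂μ < ⊤ := by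
  classical
  -- the distance from the edge `e` to `b`
  set r : ((Fin d → ℤ) × Fin d) → ℕ := fun e => Finset.univ.sup fun i => (e.1 i - b.1 i).natAbs with hrdef
  set β : ((Fin d → ℤ) × Fin d) → ℝ≥0∞ := fun e => ((r e : ℝ≥0∞) + 1) with hβdef
  have hβ0 : ∀ e, β e ≠ 0 := fun e => (zero_lt_one.trans_le (le_add_self)).ne'
  have hβt : ∀ e, β e ≠ ⊤ := fun e => by simp [hβdef, ENNReal.add_ne_top]
  have hβ1 : ∀ e, (1 : ℝ≥0∞) ≤ β e := fun e => le_add_self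
  -- the summable weight
  set Z : ℝ≥0∞ := ∑' e : ((Fin d → ℤ) × Fin d), β e ^ (-(d + 2 : ℝ)) with hZdef
  have hZ : Z < ⊤ := aux_shell d b
  -- measurable hulls of the events `{b ∈ π ω e}`
  choose T hTsub hTmeas hTμ using fun e : ((Fin d → ℤ) × Fin d) =>
    MeasureTheory.exists_measurable_superset μ {ω | b ∈ π ω e}
  set Nt : Ω → ℝ≥0∞ := fun ω => ∑' e : ((Fin d → ℤ) × Fin d), (T e).indicator (fun _ => (1 : ℝ≥0∞)) ω with hNtdef
  have hNtmeas : Measurable Nt :=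
    Measurable.ennreal_tsum fun e => measurable_const.indicator (hTmeas e)
  -- distance lower bound via the norm
  have hr_norm : ∀ e : ((Fin d → ℤ) × Fin d), ((r e : ℝ)) ≤ ‖e.1 - b.1‖ := by
    intro e
    obtain ⟨i, -, hi⟩ := Finset.exists_mem_eq_sup Finset.univ
      ⟨e.2, Finset.mem_univ _⟩ (fun i => (e.1 i - b.1 i).natAbs)
    have h1 : ((r e : ℝ)) = ‖(e.1 - b.1) i‖ := by
      rw [hrdef]
      simp only [hi, Pi.sub_apply, Int.norm_eq_abs, Nat.cast_natAbs]
      push_cast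
      ring
    rw [h1]
    exact norm_le_pi_norm _ i
  -- pointwise comparison with the hull count
  have hpt : ∀ ω, (∑' e : ((Fin d → ℤ) × Fin d), (if b ∈ π ω e then (1 : ℝ≥0∞) else 0)) ≤ Nt ω := by
    intro ω
    refine ENNReal.tsum_le_tsum fun e => ?_
    by_cases hb : b ∈ π ω e
    · simp [hb, Set.indicator_of_mem (hTsub e hb)]
    · simp [hb]
  -- the key finiteness statement, for any exponent `q > 1`
  have key : ∀ q : ℝ, 1 < q → ∫⁻ ω, Nt ω ^ q ∂μ < ⊤ := by
    intro q hq
    have hq0 : (0 : ℝ) < q := lt_trans zero_lt_one hq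
    have hqq' : q.HolderConjugate q.conjExponent := Real.HolderConjugate.conjExponent hq
    set q' : ℝ := q.conjExponent with hq'def
    have hq'0 : (0 : ℝ) < q' := hqq'.symm.pos
    have hdiv : q / q' = q - 1 := hqq'.div_conj_eq_sub_one
    -- the tail-bound exponent
    set M : ℝ := (d + 2) * q with hMdef
    have hM : 1 ≤ M := by nlinarith [hq.le]
    obtain ⟨C, hC⟩ := htail M hM
    set C₃ : ℝ := max (max C 0 * 4 ^ M) (2 ^ M) with hC₃def
    have h2M : (0 : ℝ) < 2 ^ M := Real.rpow_pos_of_pos (by norm_num) M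
    have h4M : (0 : ℝ) < 4 ^ M := Real.rpow_pos_of_pos (by norm_num) M
    have hC₃0 : 0 < C₃ := lt_of_lt_of_le h2M (le_max_right _ _)
    -- the master measure bound
    have hmeas_bound : ∀ e : ((Fin d → ℤ) × Fin d),
        μ (T e) ≤ ENNReal.ofReal (C₃ * ((r e : ℝ) + 1) ^ (-M)) := by
      intro e
      rw [hTμ e]
      rcases lt_or_ge (r e) 2 with h2 | h2
      · -- close edges: trivial bound
        refine le_trans prob_le_one ?_
        rw [ENNReal.one_le_ofReal]
        have hle2 : ((r e : ℝ) + 1) ≤ 2 := by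
          have : (r e : ℝ) ≤ 1 := by exact_mod_cast Nat.lt_succ_iff.1 h2
          linarith
        have h1 : (2 : ℝ) ^ (-M) ≤ ((r e : ℝ) + 1) ^ (-M) :=
          Real.rpow_le_rpow_of_nonpos (by positivity) hle2 (by linarith)
        calc (1 : ℝ) = 2 ^ M * 2 ^ (-M) := by
              rw [← Real.rpow_add (by norm_num)]; simp
          _ ≤ C₃ * ((r e : ℝ) + 1) ^ (-M) :=
              mul_le_mul (le_max_right _ _) h1 (by positivity) hC₃0.le
      · -- far edges: use the tail bound at `n = r e - 1`
        set n : ℕ := r e - 1 with hndef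
        have hn1 : 1 ≤ n := by omega
        have hncast : (n : ℝ) = (r e : ℝ) - 1 := by
          rw [hndef]; push_cast [Nat.cast_sub (by omega : 1 ≤ r e)]; ring
        have hsub : {ω | b ∈ π ω e} ⊆ {ω | (n : ℝ) < ((π ω e).card : ℝ)} := by
          intro ω hbω
          have hcc := hconn ω e b hbω
          have := hr_norm e
          simp only [Set.mem_setOf_eq]
          rw [hncast]
          linarith
        refine le_trans (measure_mono hsub) (le_trans (hC e n hn1)
          (ENNReal.ofReal_le_ofReal ?_))
        rcases le_or_gt C 0 with hCneg | hCpos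
        · have hL : C * (n : ℝ) ^ (-M) ≤ 0 :=
            mul_nonpos_of_nonpos_of_nonneg hCneg (by positivity)
          have hR : 0 ≤ C₃ * ((r e : ℝ) + 1) ^ (-M) := by positivity
          linarith
        · have hre2 : (2 : ℝ) ≤ (r e : ℝ) := by exact_mod_cast h2
          have hquarter : ((r e : ℝ) + 1) / 4 ≤ (n : ℝ) := by
            rw [hncast]; linarith
          have hrp : (n : ℝ) ^ (-M) ≤ (((r e : ℝ) + 1) / 4) ^ (-M) :=
            Real.rpow_le_rpow_of_nonpos (by positivity) hquarter (by linarith)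
          have hsplit : (((r e : ℝ) + 1) / 4) ^ (-M)
              = ((r e : ℝ) + 1) ^ (-M) * 4 ^ M := by
            rw [div_eq_mul_inv, Real.mul_rpow (by positivity) (by positivity),
              Real.inv_rpow (by norm_num), ← Real.rpow_neg (by norm_num), neg_neg]
          calc C * (n : ℝ) ^ (-M) ≤ C * ((((r e : ℝ) + 1) / 4) ^ (-M)) :=
                mul_le_mul_of_nonneg_left hrp hCpos.le
            _ = (C * 4 ^ M) * ((r e : ℝ) + 1) ^ (-M) := by rw [hsplit]; ring
            _ ≤ C₃ * ((r e : ℝ) + 1) ^ (-M) := by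
                refine mul_le_mul_of_nonneg_right ?_ (by positivity)
                refine le_trans ?_ (le_max_left _ _)
                exact mul_le_mul_of_nonneg_right (le_max_left C 0) h4M.le
    -- rewrite the measure bound in `ℝ≥0∞` terms
    have hofReal : ∀ e : ((Fin d → ℤ) × Fin d), ENNReal.ofReal (C₃ * ((r e : ℝ) + 1) ^ (-M))
        = ENNReal.ofReal C₃ * β e ^ (-M) := by
      intro e
      rw [ENNReal.ofReal_mul hC₃0.le]
      congr 1
      rw [← ENNReal.ofReal_rpow_of_pos (by positivity)]
      congr 1
      rw [ENNReal.ofReal_add (by positivity) zero_le_one, ENNReal.ofReal_natCast,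
        ENNReal.ofReal_one]
    -- the weight and its properties
    set w : ℝ := (d + 2) / q' with hwdef
    have hw0 : 0 ≤ w := by positivity
    set W : ((Fin d → ℤ) × Fin d) → ℝ≥0∞ := fun e => β e ^ w with hWdef
    have hW0 : ∀ e, W e ≠ 0 := fun e => by
      simp [hWdef, ENNReal.rpow_eq_zero_iff, hβ0 e, hβt e]
    have hWt : ∀ e, W e ≠ ⊤ := fun e => by
      simp [hWdef, ENNReal.rpow_eq_top_iff, hβ0 e, hβt e]
    set A : Ω → ℝ≥0∞ := fun ω =>
      ∑' e : ((Fin d → ℤ) × Fin d), W e ^ q * (T e).indicator (fun _ => (1 : ℝ≥0∞)) ω with hAdef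
    have hAmeas : Measurable A :=
      Measurable.ennreal_tsum fun e =>
        (measurable_const.indicator (hTmeas e)).const_mul _
    -- pointwise Hölder inequality
    have holder : ∀ ω, Nt ω ≤ (A ω) ^ (1 / q) * Z ^ (1 / q') := by
      intro ω
      have hcount := ENNReal.lintegral_mul_le_Lp_mul_Lq (Measure.count : Measure ((Fin d → ℤ) × Fin d)) hqq'
        (f := fun e => (T e).indicator (fun _ => (1 : ℝ≥0∞)) ω * W e)
        (g := fun e => (W e)⁻¹)
        (measurable_of_countable _).aemeasurable (measurable_of_countable _).aemeasurable
      rw [lintegral_count, lintegral_count, lintegral_count] at hcount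
      have hL : ∑' e : ((Fin d → ℤ) × Fin d), ((fun e => (T e).indicator (fun _ => (1 : ℝ≥0∞)) ω * W e)
          * fun e => (W e)⁻¹) e = Nt ω := by
        refine tsum_congr fun e => ?_
        simp only [Pi.mul_apply]
        rw [mul_assoc, ENNReal.mul_inv_cancel (hW0 e) (hWt e), mul_one]
      have hA' : ∑' e : ((Fin d → ℤ) × Fin d), ((T e).indicator (fun _ => (1 : ℝ≥0∞)) ω * W e) ^ q = A ω := by
        refine tsum_congr fun e => ?_
        by_cases hω : ω ∈ T e
        · simp [Set.indicator_of_mem hω, one_mul, mul_one]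
        · simp [Set.indicator_of_notMem hω, ENNReal.zero_rpow_of_pos hq0]
      have hZ' : ∑' e : ((Fin d → ℤ) × Fin d), ((W e)⁻¹) ^ q' = Z := by
        refine tsum_congr fun e => ?_
        rw [hWdef]
        simp only
        rw [← ENNReal.rpow_neg, ← ENNReal.rpow_mul]
        congr 1
        rw [hwdef]
        field_simp
      rw [hL, hA', hZ'] at hcount
      exact hcount
    -- raise to the power `q`
    have hNq : ∀ ω, Nt ω ^ q ≤ A ω * Z ^ (q - 1) := by
      intro ω
      have h1 : Nt ω ^ q ≤ ((A ω) ^ (1 / q) * Z ^ (1 / q')) ^ q :=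
        ENNReal.rpow_le_rpow (holder ω) hq0.le
      refine le_trans h1 (le_of_eq ?_)
      rw [ENNReal.mul_rpow_of_nonneg _ _ hq0.le, ← ENNReal.rpow_mul, ← ENNReal.rpow_mul]
      congr 1
      · rw [one_div, inv_mul_cancel₀ hq0.ne', ENNReal.rpow_one]
      · congr 1
        rw [one_div, inv_mul_eq_div, hdiv]
    -- the summand bound
    have hterm : ∀ e : ((Fin d → ℤ) × Fin d), W e ^ q * μ (T e) ≤ ENNReal.ofReal C₃ * β e ^ (-(d + 2 : ℝ)) := by
      intro e
      have hWq : W e ^ q = β e ^ (w * q) := by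
        rw [hWdef]; simp only; rw [← ENNReal.rpow_mul]
      calc W e ^ q * μ (T e)
          ≤ β e ^ (w * q) * (ENNReal.ofReal C₃ * β e ^ (-M)) := by
            rw [hWq]
            exact mul_le_mul_right (le_trans (hmeas_bound e) (le_of_eq (hofReal e))) _
        _ = ENNReal.ofReal C₃ * (β e ^ (w * q) * β e ^ (-M)) := by ring
        _ = ENNReal.ofReal C₃ * β e ^ (-(d + 2 : ℝ)) := by
            rw [← ENNReal.rpow_add _ _ (hβ0 e) (hβt e)]
            congr 2
            rw [hwdef, hMdef, div_mul_eq_mul_div, mul_div_assoc, hdiv]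
            ring
    -- integrate
    have hintA : ∫⁻ ω, A ω ∂μ = ∑' e : ((Fin d → ℤ) × Fin d), W e ^ q * μ (T e) := by
      rw [hAdef]
      simp only
      rw [lintegral_tsum fun e =>
        ((measurable_const.indicator (hTmeas e)).const_mul _).aemeasurable]
      refine tsum_congr fun e => ?_
      rw [lintegral_const_mul _ (measurable_const.indicator (hTmeas e)),
        lintegral_indicator_const (hTmeas e), one_mul]
    calc ∫⁻ ω, Nt ω ^ q ∂μ ≤ ∫⁻ ω, A ω * Z ^ (q - 1) ∂μ := lintegral_mono hNq
      _ = (∫⁻ ω, A ω ∂μ) * Z ^ (q - 1) := lintegral_mul_const _ hAmeas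
      _ = (∑' e : ((Fin d → ℤ) × Fin d), W e ^ q * μ (T e)) * Z ^ (q - 1) := by rw [hintA]
      _ ≤ (∑' e : ((Fin d → ℤ) × Fin d), ENNReal.ofReal C₃ * β e ^ (-(d + 2 : ℝ))) * Z ^ (q - 1) :=
          mul_le_mul_left (ENNReal.tsum_le_tsum hterm) _
      _ = (ENNReal.ofReal C₃ * Z) * Z ^ (q - 1) := by rw [ENNReal.tsum_mul_left]
      _ < ⊤ := ENNReal.mul_lt_top (ENNReal.mul_lt_top ENNReal.ofReal_lt_top hZ)
          (ENNReal.rpow_lt_top_of_nonneg (by linarith) hZ.ne)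
  -- conclude: compare `x^p` with `1 + x^(p+1)`
  have hp0 : (0 : ℝ) ≤ p := by linarith
  have step1 : ∫⁻ ω, (∑' e : ((Fin d → ℤ) × Fin d), (if b ∈ π ω e then (1 : ℝ≥0∞) else 0)) ^ p ∂μ
      ≤ ∫⁻ ω, (1 + Nt ω ^ (p + 1)) ∂μ := by
    refine lintegral_mono fun ω => ?_
    refine le_trans (ENNReal.rpow_le_rpow (hpt ω) hp0) ?_
    rcases le_total (Nt ω) 1 with hle | hle
    · exact le_trans (ENNReal.rpow_le_one hle hp0) le_self_add
    · exact le_trans (ENNReal.rpow_le_rpow_of_exponent_le hle (by linarith)) le_add_self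
  refine lt_of_le_of_lt step1 ?_
  rw [lintegral_add_left measurable_const, lintegral_const, measure_univ, mul_one]
  exact ENNReal.add_lt_top.2 ⟨ENNReal.one_lt_top, key (p + 1) (by linarith)⟩
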